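/- The group obtained from the presentation of G(Ẽ₆^{(1,1)}) by adding the quadratic relations g² = 1 for every generator t₀, t₁, s₁, …, s₆ is isomorphic to the group obtained from the presentation of G'(Ẽ₆^{(1,1)}) by adding the quadratic relations tᵢ² = 1 for all i ∈ ℤ and sⱼ² = 1 for j ∈ {1,…,6} (both present the hyperbolic elliptic Weyl group Hyp(Ẽ₆^{(1,1)})). -/

import Mathlib

/-!
STATEMENT 9: The group obtained from the presentation of G(Ẽ₆^{(1,1)}) by adding the
quadratic relations g² = 1 for every generator is isomorphic to the group obtained
from the presentation of G'(Ẽ₆^{(1,1)}) by adding the quadratic relations tᵢ² = 1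
(i ∈ ℤ) and sⱼ² = 1; both present Hyp(Ẽ₆^{(1,1)}).
-/

namespace EllipticE6Hyp

/-- Generators of `G(Ẽ₆^{(1,1)})`: `Sum.inl i` is `tᵢ` (`i ∈ {0,1}`),
`Sum.inr j` is `s_(j+1)` (so `Sum.inr 0` is `s₁`, ..., `Sum.inr 5` is `s₆`). -/
abbrev GenG : Type := Fin 2 ⊕ Fin 6

/-- Generators of `G'(Ẽ₆^{(1,1)})`: `Sum.inl i` is `tᵢ` (`i ∈ ℤ`),
`Sum.inr j` is `s_(j+1)`. -/
abbrev GenG' : Type := ℤ ⊕ Fin 6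

/-- The braid relator `(aba)⁻¹(bab)` encoding the relation `aba = bab`. -/
def br {α : Type} (a b : FreeGroup α) : FreeGroup α := (a * b * a)⁻¹ * (b * a * b)

/-- The commutation relator `(ab)⁻¹(ba)` encoding the relation `ab = ba`. -/
def cm {α : Type} (a b : FreeGroup α) : FreeGroup α := (a * b)⁻¹ * (b * a)

/-- The pairs of (0-indexed) `s`-generators joined by an edge in the diagram,
i.e. satisfying a braid relation: (s₁,s₄), (s₂,s₅), (s₃,s₆). -/
def braidPairs : List (Fin 6 × Fin 6) := [(0, 3), (1, 4), (2, 5)]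

def tG (i : Fin 2) : FreeGroup GenG := FreeGroup.of (Sum.inl i)
def sG (j : Fin 6) : FreeGroup GenG := FreeGroup.of (Sum.inr j)

/-- Relators of the elliptic Dynkin presentation of `G(Ẽ₆^{(1,1)})`:
braid relations between `t₀, t₁` and `s₁, s₂, s₃`, braid relations along the edges
of the `s`-part of the diagram, the elliptic relations for `s₁, s₂, s₃`, and
commutation relations for all remaining pairs of distinct generators except `{t₀,t₁}`. -/
def relsG : Set (FreeGroup GenG) :=
  { r | (∃ i : Fin 2, ∃ j : Fin 6, j.val < 3 ∧ r = br (tG i) (sG j)) ∨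
        (∃ p ∈ braidPairs, r = br (sG p.1) (sG p.2)) ∨
        (∃ j : Fin 6, j.val < 3 ∧
          r = (sG j * tG 1 * tG 0 * sG j * tG 1 * tG 0)⁻¹ *
              (tG 1 * tG 0 * sG j * tG 1 * tG 0 * sG j)) ∨
        (∃ i j : Fin 6, i ≠ j ∧ (i, j) ∉ braidPairs ∧ (j, i) ∉ braidPairs ∧
          r = cm (sG i) (sG j)) ∨
        (∃ i : Fin 2, ∃ j : Fin 6, 3 ≤ j.val ∧ r = cm (tG i) (sG j)) }

def tG' (i : ℤ) : FreeGroup GenG' := FreeGroup.of (Sum.inl i)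
def sG' (j : Fin 6) : FreeGroup GenG' := FreeGroup.of (Sum.inr j)

/-- Relators of the new presentation of `G'(Ẽ₆^{(1,1)})`: braid relations between
every `tᵢ` (`i ∈ ℤ`) and `s₁, s₂, s₃`, the relations `tᵢtᵢ₋₁ = tⱼtⱼ₋₁`, braid relations
along the edges of the `s`-part of the diagram, commutation relations between the
remaining pairs of distinct `s`-generators, and commutation of every `tᵢ` with
`s₄, …, s₆`. -/
def relsG' : Set (FreeGroup GenG') :=
  { r | (∃ i : ℤ, ∃ j : Fin 6, j.val < 3 ∧ r = br (tG' i) (sG' j)) ∨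
        (∃ i j : ℤ, r = (tG' i * tG' (i - 1))⁻¹ * (tG' j * tG' (j - 1))) ∨
        (∃ p ∈ braidPairs, r = br (sG' p.1) (sG' p.2)) ∨
        (∃ i j : Fin 6, i ≠ j ∧ (i, j) ∉ braidPairs ∧ (j, i) ∉ braidPairs ∧
          r = cm (sG' i) (sG' j)) ∨
        (∃ i : ℤ, ∃ j : Fin 6, 3 ≤ j.val ∧ r = cm (tG' i) (sG' j)) }

/-- Relators of the `G`-presentation together with the quadratic relators `g² = 1`
for every generator. -/
def relsHypG : Set (FreeGroup GenG) :=
  relsG ∪ { r | ∃ x : GenG, r = (FreeGroup.of x) ^ 2 }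

/-- Relators of the `G'`-presentation together with the quadratic relators `tᵢ² = 1`
for all `i ∈ ℤ` and `sⱼ² = 1` for all `j`. -/
def relsHypG' : Set (FreeGroup GenG') :=
  relsG' ∪ { r | ∃ x : GenG', r = (FreeGroup.of x) ^ 2 }


/-! ### Auxiliary lemmas -/

section Key
variable {G : Type*} [Group G] {a b u : G}

/-- From braids of `a,u` and `b,u` plus the "elliptic" relation for `c = b*a`,
derive the braid relation of `b*a*b` with `u`. -/
lemma braid_up (ha : a * a = 1) (hu : u * u = 1)
    (hau : a * u * a = u * a * u) (hbu : b * u * b = u * b * u)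
    (hE : u * (b * a) * u * (b * a) = (b * a) * u * (b * a) * u) :
    (b * a * b) * u * (b * a * b) = u * (b * a * b) * u := by
  have A : ∀ x : G, a * (a * x) = x := fun x => by rw [← mul_assoc, ha, one_mul]
  have U : ∀ x : G, u * (u * x) = x := fun x => by rw [← mul_assoc, hu, one_mul]
  have AU : ∀ x : G, a * (u * (a * x)) = u * (a * (u * x)) := fun x => by
    simpa only [mul_assoc] using congrArg (· * x) hau
  have BU : ∀ x : G, b * (u * (b * x)) = u * (b * (u * x)) := fun x => by
    simpa only [mul_assoc] using congrArg (· * x) hbu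
  have E : ∀ x : G, u * (b * (a * (u * (b * (a * x))))) = b * (a * (u * (b * (a * (u * x))))) :=
    fun x => by simpa only [mul_assoc] using congrArg (· * x) hE
  have claim1 : ∀ x : G,
      b * (a * (b * (u * (b * (a * (u * x)))))) = u * (b * (a * (u * (b * x)))) := by
    intro x
    rw [BU (a * (u * x)), ← AU x, ← E (a * x), A x]
  have h := claim1 (u * (b * (1 : G)))
  rw [U (b * (1 : G)), BU (1 : G), U (b * (u * (1 : G)))] at h
  simpa only [mul_assoc, mul_one] using h

/-- Conversely, from the braids of `a,u`, `b,u` and `b*a*b,u` derive the elliptic relation. -/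
lemma E_of_braid (ha : a * a = 1) (hb : b * b = 1) (hu : u * u = 1)
    (hau : a * u * a = u * a * u) (hbu : b * u * b = u * b * u)
    (hbab : (b * a * b) * u * (b * a * b) = u * (b * a * b) * u) :
    u * (b * a) * u * (b * a) = (b * a) * u * (b * a) * u := by
  have A : ∀ x : G, a * (a * x) = x := fun x => by rw [← mul_assoc, ha, one_mul]
  have B : ∀ x : G, b * (b * x) = x := fun x => by rw [← mul_assoc, hb, one_mul]
  have U : ∀ x : G, u * (u * x) = x := fun x => by rw [← mul_assoc, hu, one_mul]
  have AU : ∀ x : G, a * (u * (a * x)) = u * (a * (u * x)) := fun x => by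
    simpa only [mul_assoc] using congrArg (· * x) hau
  have BU : ∀ x : G, b * (u * (b * x)) = u * (b * (u * x)) := fun x => by
    simpa only [mul_assoc] using congrArg (· * x) hbu
  have BABU : ∀ x : G,
      b * (a * (b * (u * (b * (a * (b * x)))))) = u * (b * (a * (b * (u * x)))) :=
    fun x => by simpa only [mul_assoc] using congrArg (· * x) hbab
  have claim1 : ∀ y : G,
      b * (a * (b * (u * (b * (a * (u * y)))))) = u * (b * (a * (u * (b * y)))) := by
    intro y
    have h := BABU (b * (u * y))
    rw [B (u * y), BU (u * y), U y] at h
    exact h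
  have h := claim1 (a * (1 : G))
  rw [BU (a * (u * (a * (1:G)))), ← AU (a * (1:G)), A (1 : G)] at h
  simpa only [mul_assoc, mul_one] using h.symm

lemma conj_c {t0 t1 : G} (h0 : t0 * t0 = 1) (h1 : t1 * t1 = 1) (k : ℤ) :
    t1 * (t1 * t0) ^ k * t1⁻¹ = (t1 * t0) ^ (-k) := by
  have e0 : t0⁻¹ = t0 := inv_eq_iff_mul_eq_one.2 h0
  have e1 : t1⁻¹ = t1 := inv_eq_iff_mul_eq_one.2 h1
  have hc : t1 * (t1 * t0) * t1⁻¹ = (t1 * t0)⁻¹ := by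
    rw [e1, mul_inv_rev, e0, e1, ← mul_assoc, h1, one_mul]
  calc t1 * (t1 * t0) ^ k * t1⁻¹ = (t1 * (t1 * t0) * t1⁻¹) ^ k := conj_zpow.symm
    _ = ((t1 * t0)⁻¹) ^ k := by rw [hc]
    _ = (t1 * t0) ^ (-k) := by rw [inv_zpow, zpow_neg]

end Key

/-! ### Generic facts about presented groups -/

lemma rel_one {α : Type} {rels : Set (FreeGroup α)} {r : FreeGroup α} (h : r ∈ rels) :
    PresentedGroup.mk rels r = 1 :=
  (QuotientGroup.eq_one_iff _).2 (Subgroup.subset_normalClosure h)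

lemma rel_eq {α : Type} {rels : Set (FreeGroup α)} {x y : FreeGroup α} (h : x⁻¹ * y ∈ rels) :
    PresentedGroup.mk rels x = PresentedGroup.mk rels y := by
  have := rel_one h
  rw [map_mul, map_inv, inv_mul_eq_one] at this
  exact this

lemma mk_of {α : Type} {rels : Set (FreeGroup α)} (x : α) :
    PresentedGroup.mk rels (FreeGroup.of x) = PresentedGroup.of x := rfl

/-! ### The group `Q = PresentedGroup relsHypG` -/

def qt (i : Fin 2) : PresentedGroup relsHypG := PresentedGroup.of (Sum.inl i)
def qs (j : Fin 6) : PresentedGroup relsHypG := PresentedGroup.of (Sum.inr j)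
def qc : PresentedGroup relsHypG := qt 1 * qt 0
def qT (i : ℤ) : PresentedGroup relsHypG := qc ^ (i - 1) * qt 1

lemma qt_sq (i : Fin 2) : qt i * qt i = 1 := by
  have h : ((FreeGroup.of (Sum.inl i : GenG)) ^ 2) ∈ relsHypG := Or.inr ⟨Sum.inl i, rfl⟩
  have := rel_one h
  rwa [map_pow, sq] at this

lemma qs_sq (j : Fin 6) : qs j * qs j = 1 := by
  have h : ((FreeGroup.of (Sum.inr j : GenG)) ^ 2) ∈ relsHypG := Or.inr ⟨Sum.inr j, rfl⟩
  have := rel_one h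
  rwa [map_pow, sq] at this

lemma qt_inv (i : Fin 2) : (qt i)⁻¹ = qt i := inv_eq_iff_mul_eq_one.2 (qt_sq i)
lemma qs_inv (j : Fin 6) : (qs j)⁻¹ = qs j := inv_eq_iff_mul_eq_one.2 (qs_sq j)

lemma qbr_ts (i : Fin 2) (j : Fin 6) (hj : j.val < 3) :
    qt i * qs j * qt i = qs j * qt i * qs j := by
  have h : br (tG i) (sG j) ∈ relsHypG := Or.inl (Or.inl ⟨i, j, hj, rfl⟩)
  have := rel_eq (x := tG i * sG j * tG i) (y := sG j * tG i * sG j) h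
  simpa only [map_mul, tG, sG, mk_of, qt, qs] using this

lemma qell (j : Fin 6) (hj : j.val < 3) :
    qs j * qt 1 * qt 0 * qs j * qt 1 * qt 0 = qt 1 * qt 0 * qs j * qt 1 * qt 0 * qs j := by
  have h : ((sG j * tG 1 * tG 0 * sG j * tG 1 * tG 0)⁻¹ *
      (tG 1 * tG 0 * sG j * tG 1 * tG 0 * sG j)) ∈ relsHypG :=
    Or.inl (Or.inr (Or.inr (Or.inl ⟨j, hj, rfl⟩)))
  have := rel_eq h
  simpa only [map_mul, tG, sG, mk_of, qt, qs] using this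

lemma qbr_ss {p : Fin 6 × Fin 6} (hp : p ∈ braidPairs) :
    qs p.1 * qs p.2 * qs p.1 = qs p.2 * qs p.1 * qs p.2 := by
  have h : br (sG p.1) (sG p.2) ∈ relsHypG := Or.inl (Or.inr (Or.inl ⟨p, hp, rfl⟩))
  have := rel_eq (x := sG p.1 * sG p.2 * sG p.1) (y := sG p.2 * sG p.1 * sG p.2) h
  simpa only [map_mul, sG, mk_of, qs] using this

lemma qcm_ss {i j : Fin 6} (hij : i ≠ j) (h1 : (i, j) ∉ braidPairs) (h2 : (j, i) ∉ braidPairs) :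
    qs i * qs j = qs j * qs i := by
  have h : cm (sG i) (sG j) ∈ relsHypG :=
    Or.inl (Or.inr (Or.inr (Or.inr (Or.inl ⟨i, j, hij, h1, h2, rfl⟩))))
  have := rel_eq (x := sG i * sG j) (y := sG j * sG i) h
  simpa only [map_mul, sG, mk_of, qs] using this

lemma qcm_ts (i : Fin 2) {j : Fin 6} (hj : 3 ≤ j.val) : qt i * qs j = qs j * qt i := by
  have h : cm (tG i) (sG j) ∈ relsHypG :=
    Or.inl (Or.inr (Or.inr (Or.inr (Or.inr ⟨i, j, hj, rfl⟩))))
  have := rel_eq (x := tG i * sG j) (y := sG j * tG i) h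
  simpa only [map_mul, tG, sG, mk_of, qt, qs] using this

lemma qconj (k : ℤ) : qt 1 * qc ^ k * qt 1 = qc ^ (-k) := by
  calc qt 1 * qc ^ k * qt 1 = qt 1 * (qt 1 * qt 0) ^ k * (qt 1)⁻¹ := by rw [qt_inv, qc]
    _ = qc ^ (-k) := conj_c (qt_sq 0) (qt_sq 1) k

lemma qT_sq (i : ℤ) : qT i * qT i = 1 := by
  rw [qT]
  calc qc ^ (i-1) * qt 1 * (qc ^ (i-1) * qt 1)
      = qc ^ (i-1) * (qt 1 * qc ^ (i-1) * qt 1) := by group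
    _ = qc ^ (i-1) * qc ^ (-(i-1)) := by rw [qconj]
    _ = 1 := by rw [← zpow_add]; norm_num

lemma qT_inv (i : ℤ) : (qT i)⁻¹ = qT i := inv_eq_iff_mul_eq_one.2 (qT_sq i)

lemma qT_mul (i : ℤ) : qT (i + 1) * qT i = qc := by
  rw [qT, qT]
  calc qc ^ (i+1-1) * qt 1 * (qc ^ (i-1) * qt 1)
      = qc ^ (i+1-1) * (qt 1 * qc ^ (i-1) * qt 1) := by group
    _ = qc ^ (i+1-1) * qc ^ (-(i-1)) := by rw [qconj]
    _ = qc ^ (i+1-1 + -(i-1)) := (zpow_add _ _ _).symm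
    _ = qc := by norm_num

lemma qT_mul' (i : ℤ) : qT i * qT (i + 1) = qc⁻¹ := by
  calc qT i * qT (i+1) = (qT i)⁻¹ * (qT (i+1))⁻¹ := by rw [qT_inv, qT_inv]
    _ = (qT (i+1) * qT i)⁻¹ := (mul_inv_rev _ _).symm
    _ = qc⁻¹ := by rw [qT_mul]

lemma qT_succ2 (i : ℤ) : qT (i + 1) * qT i * qT (i + 1) = qT (i + 2) := by
  rw [qT_mul i, qT, qT, ← mul_assoc, ← zpow_one_add, show (1 + (i+1-1) : ℤ) = i + 2 - 1 by ring]

lemma qT_pred2 (i : ℤ) : qT i * qT (i + 1) * qT i = qT (i - 1) := by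
  rw [qT_mul' i, qT, qT, ← mul_assoc, ← zpow_neg_one, ← zpow_add,
    show ((-1) + (i-1) : ℤ) = i - 1 - 1 by ring]

lemma qT_zero : qT 0 = qt 0 := by
  rw [qT, show ((0:ℤ) - 1) = -1 by norm_num, zpow_neg_one]
  show (qt 1 * qt 0)⁻¹ * qt 1 = qt 0
  rw [mul_inv_rev, mul_assoc, inv_mul_cancel, mul_one, qt_inv]

lemma qT_one : qT 1 = qt 1 := by
  rw [qT, show ((1:ℤ) - 1) = 0 by norm_num, zpow_zero, one_mul]

lemma qell' (j : Fin 6) (hj : j.val < 3) :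
    qs j * qc * qs j * qc = qc * qs j * qc * qs j := by
  simpa only [qc, mul_assoc] using qell j hj

lemma qell_inv (j : Fin 6) (hj : j.val < 3) :
    qs j * qc⁻¹ * qs j * qc⁻¹ = qc⁻¹ * qs j * qc⁻¹ * qs j := by
  have h := congrArg (·⁻¹) (qell' j hj)
  simp only [mul_inv_rev, qs_inv, mul_assoc] at h
  simpa only [mul_assoc] using h.symm

lemma qT_braid (i : ℤ) (j : Fin 6) (hj : j.val < 3) :
    qT i * qs j * qT i = qs j * qT i * qs j := by
  have key_up : ∀ i : ℤ,
      (∀ j : Fin 6, j.val < 3 → qT i * qs j * qT i = qs j * qT i * qs j) →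
      (∀ j : Fin 6, j.val < 3 → qT (i+1) * qs j * qT (i+1) = qs j * qT (i+1) * qs j) →
      (∀ j : Fin 6, j.val < 3 → qT (i+2) * qs j * qT (i+2) = qs j * qT (i+2) * qs j) := by
    intro i h1 h2 j hj
    have hE : qs j * (qT (i+1) * qT i) * qs j * (qT (i+1) * qT i) =
        (qT (i+1) * qT i) * qs j * (qT (i+1) * qT i) * qs j := by
      rw [qT_mul i]; exact qell' j hj
    have hb := braid_up (qT_sq i) (qs_sq j) (h1 j hj) (h2 j hj) hE
    rwa [qT_succ2 i] at hb
  have key_down : ∀ i : ℤ,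
      (∀ j : Fin 6, j.val < 3 → qT i * qs j * qT i = qs j * qT i * qs j) →
      (∀ j : Fin 6, j.val < 3 → qT (i+1) * qs j * qT (i+1) = qs j * qT (i+1) * qs j) →
      (∀ j : Fin 6, j.val < 3 → qT (i-1) * qs j * qT (i-1) = qs j * qT (i-1) * qs j) := by
    intro i h1 h2 j hj
    have hE : qs j * (qT i * qT (i+1)) * qs j * (qT i * qT (i+1)) =
        (qT i * qT (i+1)) * qs j * (qT i * qT (i+1)) * qs j := by
      rw [qT_mul' i]; exact qell_inv j hj
    have hb := braid_up (qT_sq (i+1)) (qs_sq j) (h2 j hj) (h1 j hj) hE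
    rwa [qT_pred2 i] at hb
  have main : ∀ i : ℤ,
      (∀ j : Fin 6, j.val < 3 → qT i * qs j * qT i = qs j * qT i * qs j) ∧
      (∀ j : Fin 6, j.val < 3 → qT (i+1) * qs j * qT (i+1) = qs j * qT (i+1) * qs j) := by
    intro i
    induction i using Int.induction_on with
    | zero =>
      constructor
      · intro j hj; rw [qT_zero]; exact qbr_ts 0 j hj
      · intro j hj; rw [show ((0:ℤ)+1) = 1 by norm_num, qT_one]; exact qbr_ts 1 j hj
    | succ k ih =>
      refine ⟨ih.2, ?_⟩
      have := key_up k ih.1 ih.2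
      rwa [show ((k:ℤ)+2) = (k:ℤ)+1+1 by ring] at this
    | pred k ih =>
      refine ⟨?_, ?_⟩
      · have := key_down (-k) ih.1 ih.2
        exact this
      · have := ih.1
        rwa [show ((-k:ℤ)-1+1) = -(k:ℤ) by ring]
  exact (main i).1 j hj

lemma qT_comm (i : ℤ) {j : Fin 6} (hj : 3 ≤ j.val) : qT i * qs j = qs j * qT i := by
  have h0 : Commute (qt 0) (qs j) := qcm_ts 0 hj
  have h1 : Commute (qt 1) (qs j) := qcm_ts 1 hj
  exact (((h1.mul_left h0).zpow_left (i-1)).mul_left h1).eq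


/-! ### The group `Q' = PresentedGroup relsHypG'` -/

def pt (i : ℤ) : PresentedGroup relsHypG' := PresentedGroup.of (Sum.inl i)
def ps (j : Fin 6) : PresentedGroup relsHypG' := PresentedGroup.of (Sum.inr j)
def pc : PresentedGroup relsHypG' := pt 1 * pt 0

lemma pt_sq (i : ℤ) : pt i * pt i = 1 := by
  have h : ((FreeGroup.of (Sum.inl i : GenG')) ^ 2) ∈ relsHypG' := Or.inr ⟨Sum.inl i, rfl⟩
  have := rel_one h
  rwa [map_pow, sq] at this

lemma ps_sq (j : Fin 6) : ps j * ps j = 1 := by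
  have h : ((FreeGroup.of (Sum.inr j : GenG')) ^ 2) ∈ relsHypG' := Or.inr ⟨Sum.inr j, rfl⟩
  have := rel_one h
  rwa [map_pow, sq] at this

lemma pt_inv (i : ℤ) : (pt i)⁻¹ = pt i := inv_eq_iff_mul_eq_one.2 (pt_sq i)
lemma ps_inv (j : Fin 6) : (ps j)⁻¹ = ps j := inv_eq_iff_mul_eq_one.2 (ps_sq j)

lemma pbr_ts (i : ℤ) (j : Fin 6) (hj : j.val < 3) :
    pt i * ps j * pt i = ps j * pt i * ps j := by
  have h : br (tG' i) (sG' j) ∈ relsHypG' := Or.inl (Or.inl ⟨i, j, hj, rfl⟩)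
  have := rel_eq (x := tG' i * sG' j * tG' i) (y := sG' j * tG' i * sG' j) h
  simpa only [map_mul, tG', sG', mk_of, pt, ps] using this

lemma pc_rel (i : ℤ) : pt i * pt (i - 1) = pc := by
  have h : ((tG' i * tG' (i - 1))⁻¹ * (tG' 1 * tG' (1 - 1))) ∈ relsHypG' :=
    Or.inl (Or.inr (Or.inl ⟨i, 1, rfl⟩))
  have := rel_eq (x := tG' i * tG' (i - 1)) (y := tG' 1 * tG' (1 - 1)) h
  rw [show ((1:ℤ) - 1) = 0 by norm_num] at this
  exact this

lemma pbr_ss {p : Fin 6 × Fin 6} (hp : p ∈ braidPairs) :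
    ps p.1 * ps p.2 * ps p.1 = ps p.2 * ps p.1 * ps p.2 := by
  have h : br (sG' p.1) (sG' p.2) ∈ relsHypG' := Or.inl (Or.inr (Or.inr (Or.inl ⟨p, hp, rfl⟩)))
  have := rel_eq (x := sG' p.1 * sG' p.2 * sG' p.1) (y := sG' p.2 * sG' p.1 * sG' p.2) h
  simpa only [map_mul, sG', mk_of, ps] using this

lemma pcm_ss {i j : Fin 6} (hij : i ≠ j) (h1 : (i, j) ∉ braidPairs) (h2 : (j, i) ∉ braidPairs) :
    ps i * ps j = ps j * ps i := by
  have h : cm (sG' i) (sG' j) ∈ relsHypG' :=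
    Or.inl (Or.inr (Or.inr (Or.inr (Or.inl ⟨i, j, hij, h1, h2, rfl⟩))))
  have := rel_eq (x := sG' i * sG' j) (y := sG' j * sG' i) h
  simpa only [map_mul, sG', mk_of, ps] using this

lemma pcm_ts (i : ℤ) {j : Fin 6} (hj : 3 ≤ j.val) : pt i * ps j = ps j * pt i := by
  have h : cm (tG' i) (sG' j) ∈ relsHypG' :=
    Or.inl (Or.inr (Or.inr (Or.inr (Or.inr ⟨i, j, hj, rfl⟩))))
  have := rel_eq (x := tG' i * sG' j) (y := sG' j * tG' i) h
  simpa only [map_mul, tG', sG', mk_of, pt, ps] using this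

lemma pt2_eq : pt 1 * pt 0 * pt 1 = pt 2 := by
  have h := pc_rel 2
  rw [show ((2:ℤ) - 1) = 1 by norm_num] at h
  calc pt 1 * pt 0 * pt 1 = pc * pt 1 := by rw [pc]
    _ = pt 2 * pt 1 * pt 1 := by rw [h]
    _ = pt 2 * (pt 1 * pt 1) := by rw [mul_assoc]
    _ = pt 2 := by rw [pt_sq, mul_one]

/-- The elliptic relation holds in `Q'`. -/
lemma p_ell (j : Fin 6) (hj : j.val < 3) :
    ps j * pt 1 * pt 0 * ps j * pt 1 * pt 0 = pt 1 * pt 0 * ps j * pt 1 * pt 0 * ps j := by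
  have hbab : (pt 1 * pt 0 * pt 1) * ps j * (pt 1 * pt 0 * pt 1) =
      ps j * (pt 1 * pt 0 * pt 1) * ps j := by
    rw [pt2_eq]; exact pbr_ts 2 j hj
  have hE := E_of_braid (pt_sq 0) (pt_sq 1) (ps_sq j)
    (pbr_ts 0 j hj) (pbr_ts 1 j hj) hbab
  simpa only [mul_assoc] using hE

/-- Expressing `pt i` in terms of `pt 0, pt 1`. -/
lemma pt_form (i : ℤ) : pc ^ (i - 1) * pt 1 = pt i := by
  have hbase : pc⁻¹ * pt 1 = pt 0 := by
    rw [pc, mul_inv_rev, mul_assoc, inv_mul_cancel, mul_one, pt_inv]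
  induction i using Int.induction_on with
  | zero => rw [show ((0:ℤ) - 1) = -1 by norm_num, zpow_neg_one]; exact hbase
  | succ k ih =>
    have hs : pt ((k:ℤ) + 1) = pc * pt k := by
      have h := pc_rel ((k:ℤ) + 1)
      rw [show ((k:ℤ) + 1 - 1) = (k:ℤ) by ring] at h
      calc pt ((k:ℤ)+1) = pt ((k:ℤ)+1) * (pt k * pt k) := by rw [pt_sq, mul_one]
        _ = (pt ((k:ℤ)+1) * pt k) * pt k := by rw [mul_assoc]
        _ = pc * pt k := by rw [h]
    rw [hs, ← ih, ← mul_assoc, ← zpow_one_add, show (1 + ((k:ℤ) - 1)) = (k:ℤ) + 1 - 1 by ring]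
  | pred k ih =>
    have hs : pt (-(k:ℤ) - 1) = pt (-(k:ℤ)) * pc := by
      have h := pc_rel (-(k:ℤ))
      calc pt (-(k:ℤ)-1) = (pt (-(k:ℤ)) * pt (-(k:ℤ))) * pt (-(k:ℤ)-1) := by
            rw [pt_sq, one_mul]
        _ = pt (-(k:ℤ)) * (pt (-(k:ℤ)) * pt (-(k:ℤ)-1)) := mul_assoc _ _ _
        _ = pt (-(k:ℤ)) * pc := by rw [h]
    have h1pc : pt 1 * pc = pc⁻¹ * pt 1 := by
      rw [hbase, pc, ← mul_assoc, pt_sq, one_mul]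
    rw [hs, ← ih, mul_assoc, h1pc, ← mul_assoc, ← zpow_sub_one]

/-! ### The two homomorphisms -/

lemma lift_psi : ∀ r ∈ relsHypG', FreeGroup.lift (Sum.elim qT qs) r = 1 := by
  intro r hr
  rcases hr with hr | ⟨x, rfl⟩
  · rcases hr with ⟨i, j, hj, rfl⟩ | ⟨i, j, rfl⟩ | ⟨p, hp, rfl⟩ | ⟨i, j, hij, h1, h2, rfl⟩ |
      ⟨i, j, hj, rfl⟩
    · simp only [br, map_mul, map_inv, tG', sG', FreeGroup.lift_apply_of, Sum.elim_inl, Sum.elim_inr]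
      rw [inv_mul_eq_one]
      exact qT_braid i j hj
    · simp only [map_mul, map_inv, tG', FreeGroup.lift_apply_of, Sum.elim_inl]
      rw [inv_mul_eq_one]
      have hi := qT_mul (i - 1); rw [show (i - 1 + 1) = i by ring] at hi
      have hj' := qT_mul (j - 1); rw [show (j - 1 + 1) = j by ring] at hj'
      rw [hi, hj']
    · simp only [br, map_mul, map_inv, sG', FreeGroup.lift_apply_of, Sum.elim_inr]
      rw [inv_mul_eq_one]
      exact qbr_ss hp
    · simp only [cm, map_mul, map_inv, sG', FreeGroup.lift_apply_of, Sum.elim_inr]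
      rw [inv_mul_eq_one]
      exact qcm_ss hij h1 h2
    · simp only [cm, map_mul, map_inv, tG', sG', FreeGroup.lift_apply_of, Sum.elim_inl, Sum.elim_inr]
      rw [inv_mul_eq_one]
      exact qT_comm i hj
  · simp only [map_pow, FreeGroup.lift_apply_of]
    cases x with
    | inl i => rw [sq, Sum.elim_inl]; exact qT_sq i
    | inr j => rw [sq, Sum.elim_inr]; exact qs_sq j

def fphi : GenG → PresentedGroup relsHypG' := Sum.elim (fun i => pt (i.val : ℤ)) ps

lemma lift_phi : ∀ r ∈ relsHypG, FreeGroup.lift fphi r = 1 := by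
  have e0 : (((0 : Fin 2)).val : ℤ) = 0 := rfl
  have e1 : (((1 : Fin 2)).val : ℤ) = 1 := rfl
  intro r hr
  rcases hr with hr | ⟨x, rfl⟩
  · rcases hr with ⟨i, j, hj, rfl⟩ | ⟨p, hp, rfl⟩ | ⟨j, hj, rfl⟩ | ⟨i, j, hij, h1, h2, rfl⟩ |
      ⟨i, j, hj, rfl⟩
    · simp only [br, map_mul, map_inv, tG, sG, FreeGroup.lift_apply_of, fphi, Sum.elim_inl,
        Sum.elim_inr]
      rw [inv_mul_eq_one]
      exact pbr_ts (i.val : ℤ) j hj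
    · simp only [br, map_mul, map_inv, sG, FreeGroup.lift_apply_of, fphi, Sum.elim_inr]
      rw [inv_mul_eq_one]
      exact pbr_ss hp
    · simp only [map_mul, map_inv, tG, sG, FreeGroup.lift_apply_of, fphi, Sum.elim_inl, Sum.elim_inr,
        e0, e1]
      rw [inv_mul_eq_one]
      exact p_ell j hj
    · simp only [cm, map_mul, map_inv, sG, FreeGroup.lift_apply_of, fphi, Sum.elim_inr]
      rw [inv_mul_eq_one]
      exact pcm_ss hij h1 h2
    · simp only [cm, map_mul, map_inv, tG, sG, FreeGroup.lift_apply_of, fphi, Sum.elim_inl,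
        Sum.elim_inr]
      rw [inv_mul_eq_one]
      exact pcm_ts (i.val : ℤ) hj
  · simp only [map_pow, FreeGroup.lift_apply_of]
    cases x with
    | inl i => rw [sq, fphi, Sum.elim_inl]; exact pt_sq (i.val : ℤ)
    | inr j => rw [sq, fphi, Sum.elim_inr]; exact ps_sq j

def psiHom : PresentedGroup relsHypG' →* PresentedGroup relsHypG :=
  PresentedGroup.toGroup lift_psi

def phiHom : PresentedGroup relsHypG →* PresentedGroup relsHypG' :=
  PresentedGroup.toGroup lift_phi

lemma psi_comp_phi : psiHom.comp phiHom = MonoidHom.id _ := by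
  apply PresentedGroup.ext
  intro x
  cases x with
  | inl i =>
    show psiHom (phiHom (PresentedGroup.of (Sum.inl i))) = PresentedGroup.of (Sum.inl i)
    rw [phiHom, PresentedGroup.toGroup.of]
    fin_cases i
    · show psiHom (pt 0) = qt 0
      rw [pt, psiHom, PresentedGroup.toGroup.of]
      exact qT_zero
    · show psiHom (pt 1) = qt 1
      rw [pt, psiHom, PresentedGroup.toGroup.of]
      exact qT_one
  | inr j =>
    show psiHom (phiHom (PresentedGroup.of (Sum.inr j))) = PresentedGroup.of (Sum.inr j)
    rw [phiHom, PresentedGroup.toGroup.of]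
    show psiHom (ps j) = qs j
    rw [ps, psiHom, PresentedGroup.toGroup.of]
    rfl

lemma phi_comp_psi : phiHom.comp psiHom = MonoidHom.id _ := by
  apply PresentedGroup.ext
  intro x
  cases x with
  | inl i =>
    show phiHom (psiHom (PresentedGroup.of (Sum.inl i))) = PresentedGroup.of (Sum.inl i)
    rw [psiHom, PresentedGroup.toGroup.of]
    show phiHom (qT i) = pt i
    rw [qT, map_mul, map_zpow, qc, map_mul]
    rw [show qt 1 = PresentedGroup.of (Sum.inl (1 : Fin 2)) from rfl,
      show qt 0 = PresentedGroup.of (Sum.inl (0 : Fin 2)) from rfl,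
      phiHom, PresentedGroup.toGroup.of, PresentedGroup.toGroup.of]
    show (pt 1 * pt 0) ^ (i - 1) * pt 1 = pt i
    rw [← pc]
    exact pt_form i
  | inr j =>
    show phiHom (psiHom (PresentedGroup.of (Sum.inr j))) = PresentedGroup.of (Sum.inr j)
    rw [psiHom, PresentedGroup.toGroup.of]
    show phiHom (qs j) = ps j
    rw [qs, phiHom, PresentedGroup.toGroup.of]
    rfl

theorem Hyp_iso : Nonempty (PresentedGroup relsHypG ≃* PresentedGroup relsHypG') :=
  ⟨MonoidHom.toMulEquiv phiHom psiHom psi_comp_phi phi_comp_psi⟩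

end EllipticE6Hyp
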